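/- There exists a graph H with domatic number 3 such that in every partition of its vertex set into three dominating sets D₁, D₂, D₃, each part has cardinality strictly greater than the domination number γ(H). -/

import Mathlib

/-- `D` is a dominating set of `G`. -/
def IsDomSet {V : Type*} (G : SimpleGraph V) (D : Set V) : Prop :=
  ∀ v : V, v ∈ D ∨ ∃ u ∈ D, G.Adj u v

/-- The domatic number: the largest `k` such that the vertex set can be
partitioned into `k` dominating sets. -/
noncomputable def domaticNumber {V : Type*} [Fintype V] (G : SimpleGraph V) : ℕ :=
  sSup {k | ∃ f : V → Fin k, ∀ i : Fin k, IsDomSet G (f ⁻¹' {i})}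

/-- The domination number: the minimum size of a dominating set. -/
noncomputable def dominationNumber {V : Type*} [Fintype V] (G : SimpleGraph V) : ℕ :=
  sInf {k | ∃ D : Finset V, IsDomSet G ↑D ∧ D.card = k}

/-! ### Auxiliary development -/

/-- open neighborhood bitmasks of our 9-vertex graph -/
def masks : Fin 9 → ℕ := ![414, 69, 3, 193, 353, 144, 26, 41, 17]

def adjB (a b : Fin 9) : Bool := (masks a).testBit b.val

lemma adjB_symm : ∀ a b : Fin 9, adjB a b = adjB b a := by decide

lemma adjB_irrefl : ∀ a : Fin 9, adjB a a = false := by decide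

def H9 : SimpleGraph (Fin 9) where
  Adj a b := adjB a b = true
  symm := ⟨fun a b h => by
    show adjB b a = true
    rw [adjB_symm b a]; exact h⟩
  loopless := ⟨fun a h => by
    have h' : adjB a a = true := h
    rw [adjB_irrefl a] at h'; exact Bool.false_ne_true h'⟩

instance : DecidableRel H9.Adj := fun a b => inferInstanceAs (Decidable (adjB a b = true))

def clausesN (m c : ℕ) : Bool :=
  (m%3 == c || m/3%3 == c || m/9%3 == c) &&
  (m/81%3 == c || m/243%3 == c || m/2187%3 == c) &&
  (m%3 == c || m/81%3 == c || m/6561%3 == c) &&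
  (m%3 == c || m/3%3 == c || m/9%3 == c || m/729%3 == c) &&
  (m%3 == c || m/27%3 == c || m/729%3 == c || m/2187%3 == c) &&
  (m/3%3 == c || m/27%3 == c || m/81%3 == c || m/729%3 == c) &&
  (m%3 == c || m/27%3 == c || m/243%3 == c || m/2187%3 == c) &&
  (m%3 == c || m/81%3 == c || m/243%3 == c || m/729%3 == c || m/6561%3 == c) &&
  (m%3 == c || m/3%3 == c || m/9%3 == c || m/27%3 == c || m/81%3 == c || m/2187%3 == c || m/6561%3 == c)

def cntN (m c : ℕ) : ℕ :=
  (if m%3 = c then 1 else 0) + (if m/3%3 = c then 1 else 0) + (if m/9%3 = c then 1 else 0) +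
  (if m/27%3 = c then 1 else 0) + (if m/81%3 = c then 1 else 0) + (if m/243%3 = c then 1 else 0) +
  (if m/729%3 = c then 1 else 0) + (if m/2187%3 = c then 1 else 0) + (if m/6561%3 = c then 1 else 0)

def okN (m : ℕ) : Bool :=
  !(clausesN m 0 && clausesN m 1 && clausesN m 2) ||
    (2 < cntN m 0 && 2 < cntN m 1 && 2 < cntN m 2)

/-- fuel-based binary range checker -/
def chk : ℕ → ℕ → ℕ → Bool
  | 0, _, _ => false
  | fuel+1, lo, len =>
    if len == 0 then true
    else if len == 1 then okN lo
    else chk fuel lo (len/2) && chk fuel (lo + len/2) (len - len/2)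

lemma chk_sound : ∀ fuel lo len, chk fuel lo len = true →
    ∀ m, lo ≤ m → m < lo + len → okN m = true := by
  intro fuel
  induction fuel with
  | zero => intro lo len h; simp [chk] at h
  | succ n ih =>
    intro lo len h m h1 h2
    rw [chk] at h
    by_cases hl0 : len = 0
    · omega
    by_cases hl1 : len = 1
    · subst hl1
      simp only [hl0, if_neg, Nat.one_ne_zero, beq_iff_eq, if_true] at h
      have hm : m = lo := by omega
      subst hm
      simpa using h
    · simp only [beq_iff_eq, hl0, hl1, if_false, Bool.and_eq_true] at h
      by_cases hm : m < lo + len / 2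
      · exact ih lo (len / 2) h.1 m h1 hm
      · exact ih (lo + len / 2) (len - len / 2) h.2 m (by omega) (by omega)

set_option maxHeartbeats 4000000 in
lemma chk_true : chk 20 0 19683 = true := by decide

lemma keyN : ∀ m, m < 19683 → okN m = true := fun m hm =>
  chk_sound 20 0 19683 chk_true m (Nat.zero_le m) (by omega)

/-- neighbors (closed) lemmas -/
lemma nb0 : ∀ u : Fin 9, (u = 0 ∨ H9.Adj u 0) → u = 0 ∨ u = 1 ∨ u = 2 ∨ u = 3 ∨ u = 4 ∨ u = 7 ∨ u = 8 := by decide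
lemma nb1 : ∀ u : Fin 9, (u = 1 ∨ H9.Adj u 1) → u = 0 ∨ u = 1 ∨ u = 2 ∨ u = 6 := by decide
lemma nb2 : ∀ u : Fin 9, (u = 2 ∨ H9.Adj u 2) → u = 0 ∨ u = 1 ∨ u = 2 := by decide
lemma nb3 : ∀ u : Fin 9, (u = 3 ∨ H9.Adj u 3) → u = 0 ∨ u = 3 ∨ u = 6 ∨ u = 7 := by decide
lemma nb4 : ∀ u : Fin 9, (u = 4 ∨ H9.Adj u 4) → u = 0 ∨ u = 4 ∨ u = 5 ∨ u = 6 ∨ u = 8 := by decide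
lemma nb5 : ∀ u : Fin 9, (u = 5 ∨ H9.Adj u 5) → u = 4 ∨ u = 5 ∨ u = 7 := by decide
lemma nb6 : ∀ u : Fin 9, (u = 6 ∨ H9.Adj u 6) → u = 1 ∨ u = 3 ∨ u = 4 ∨ u = 6 := by decide
lemma nb7 : ∀ u : Fin 9, (u = 7 ∨ H9.Adj u 7) → u = 0 ∨ u = 3 ∨ u = 5 ∨ u = 7 := by decide
lemma nb8 : ∀ u : Fin 9, (u = 8 ∨ H9.Adj u 8) → u = 0 ∨ u = 4 ∨ u = 8 := by decide

/-- the example domatic partition -/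
lemma h3mem : ∃ f : Fin 9 → Fin 3, ∀ i : Fin 3, IsDomSet H9 (f ⁻¹' {i}) := by
  refine ⟨![0,1,2,2,2,0,0,1,1], ?_⟩
  intro i v
  simp only [Set.mem_preimage, Set.mem_singleton_iff]
  revert i v
  decide

/-- vertex 2 has closed neighborhood of size 3, bounding the domatic number -/
lemma domatic_bound : ∀ k ∈ {k | ∃ f : Fin 9 → Fin k, ∀ i : Fin k, IsDomSet H9 (f ⁻¹' {i})}, k ≤ 3 := by
  rintro k ⟨f, hf⟩
  have hg : ∀ i : Fin k, ∃ u : Fin 9, f u = i ∧ u ∈ ({0, 1, 2} : Finset (Fin 9)) := by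
    intro i
    rcases hf i 2 with h | ⟨u, hu, hadj⟩
    · exact ⟨2, h, by decide⟩
    · rcases nb2 u (Or.inr hadj) with rfl | rfl | rfl <;> exact ⟨_, hu, by decide⟩
  choose g hg1 hg2 using hg
  have hinj : Function.Injective g := fun a b hab => by rw [← hg1 a, ← hg1 b, hab]
  calc k = (Finset.univ : Finset (Fin k)).card := by simp
    _ ≤ ({0, 1, 2} : Finset (Fin 9)).card :=
        Finset.card_le_card_of_injOn g (fun i _ => hg2 i) (fun a _ b _ h => hinj h)
    _ = 3 := by decide

lemma domatic_eq : domaticNumber H9 = 3 := by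
  unfold domaticNumber
  apply le_antisymm
  · exact csSup_le ⟨3, h3mem⟩ domatic_bound
  · exact le_csSup ⟨3, domatic_bound⟩ h3mem

lemma domination_le : dominationNumber H9 ≤ 2 := by
  apply Nat.sInf_le
  refine ⟨({0, 4} : Finset (Fin 9)), ?_, by decide⟩
  intro v
  simp only [Finset.coe_insert, Finset.coe_singleton, Set.mem_insert_iff, Set.mem_singleton_iff]
  revert v
  decide

set_option maxHeartbeats 1600000 in
theorem exists_graph_all_three_partitions_parts_large :
    ∃ (n : ℕ) (H : SimpleGraph (Fin n)),
      domaticNumber H = 3 ∧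
      ∀ f : Fin n → Fin 3, (∀ i : Fin 3, IsDomSet H (f ⁻¹' {i})) →
        ∀ i : Fin 3, dominationNumber H < (f ⁻¹' {i}).ncard := by
  refine ⟨9, H9, domatic_eq, ?_⟩
  intro f hf i
  have hf' : ∀ (j : Fin 3) (v : Fin 9), ∃ u, f u = j ∧ (u = v ∨ H9.Adj u v) := by
    intro j v
    rcases hf j v with h | ⟨u, hu, hadj⟩
    · exact ⟨v, h, Or.inl rfl⟩
    · exact ⟨u, hu, Or.inr hadj⟩
  -- base-3 encoding
  set m : ℕ := (f 0).val + 3 * (f 1).val + 9 * (f 2).val + 27 * (f 3).val + 81 * (f 4).val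
      + 243 * (f 5).val + 729 * (f 6).val + 2187 * (f 7).val + 6561 * (f 8).val with hmdef
  have hb : ∀ v : Fin 9, (f v).val < 3 := fun v => (f v).isLt
  have b0 := hb 0; have b1 := hb 1; have b2 := hb 2; have b3 := hb 3; have b4 := hb 4
  have b5 := hb 5; have b6 := hb 6; have b7 := hb 7; have b8 := hb 8
  have d0 : m % 3 = (f 0).val := by omega
  have d1 : m / 3 % 3 = (f 1).val := by omega
  have d2 : m / 9 % 3 = (f 2).val := by omega
  have d3 : m / 27 % 3 = (f 3).val := by omega
  have d4 : m / 81 % 3 = (f 4).val := by omega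
  have d5 : m / 243 % 3 = (f 5).val := by omega
  have d6 : m / 729 % 3 = (f 6).val := by omega
  have d7 : m / 2187 % 3 = (f 7).val := by omega
  have d8 : m / 6561 % 3 = (f 8).val := by omega
  have hcl : ∀ j : Fin 3, clausesN m j.val = true := by
    intro j
    simp only [clausesN, d0, d1, d2, d3, d4, d5, d6, d7, d8, Bool.and_eq_true, Bool.or_eq_true,
      beq_iff_eq]
    refine ⟨⟨⟨⟨⟨⟨⟨⟨?_, ?_⟩, ?_⟩, ?_⟩, ?_⟩, ?_⟩, ?_⟩, ?_⟩, ?_⟩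
    · obtain ⟨u, hu, hc⟩ := hf' j 2
      have hv := congrArg Fin.val hu
      rcases nb2 u hc with rfl | rfl | rfl <;> simp [hv]
    · obtain ⟨u, hu, hc⟩ := hf' j 5
      have hv := congrArg Fin.val hu
      rcases nb5 u hc with rfl | rfl | rfl <;> simp [hv]
    · obtain ⟨u, hu, hc⟩ := hf' j 8
      have hv := congrArg Fin.val hu
      rcases nb8 u hc with rfl | rfl | rfl <;> simp [hv]
    · obtain ⟨u, hu, hc⟩ := hf' j 1
      have hv := congrArg Fin.val hu
      rcases nb1 u hc with rfl | rfl | rfl | rfl <;> simp [hv]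
    · obtain ⟨u, hu, hc⟩ := hf' j 3
      have hv := congrArg Fin.val hu
      rcases nb3 u hc with rfl | rfl | rfl | rfl <;> simp [hv]
    · obtain ⟨u, hu, hc⟩ := hf' j 6
      have hv := congrArg Fin.val hu
      rcases nb6 u hc with rfl | rfl | rfl | rfl <;> simp [hv]
    · obtain ⟨u, hu, hc⟩ := hf' j 7
      have hv := congrArg Fin.val hu
      rcases nb7 u hc with rfl | rfl | rfl | rfl <;> simp [hv]
    · obtain ⟨u, hu, hc⟩ := hf' j 4
      have hv := congrArg Fin.val hu
      rcases nb4 u hc with rfl | rfl | rfl | rfl | rfl <;> simp [hv]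
    · obtain ⟨u, hu, hc⟩ := hf' j 0
      have hv := congrArg Fin.val hu
      rcases nb0 u hc with rfl | rfl | rfl | rfl | rfl | rfl | rfl <;> simp [hv]
  have hok := keyN m (by omega)
  have hcl0 := hcl 0
  have hcl1 := hcl 1
  have hcl2 := hcl 2
  simp only [Fin.val_zero, Fin.val_one] at hcl0 hcl1
  have hcl2' : clausesN m 2 = true := hcl2
  have hcnt : 2 < cntN m 0 ∧ 2 < cntN m 1 ∧ 2 < cntN m 2 := by
    simp only [okN, hcl0, hcl1, hcl2', Bool.and_self, Bool.and_true, Bool.not_true,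
      Bool.false_or, Bool.and_eq_true, decide_eq_true_eq] at hok
    tauto
  have hcnti : 2 < cntN m i.val := by
    fin_cases i
    · exact hcnt.1
    · exact hcnt.2.1
    · exact hcnt.2.2
  -- relate cntN to the cardinality of the fiber
  have hset : f ⁻¹' {i} = ↑(Finset.univ.filter fun v => f v = i) := by
    ext v; simp
  rw [hset, Set.ncard_coe_finset]
  have hcard : (Finset.univ.filter fun v => f v = i).card = cntN m i.val := by
    rw [Finset.card_filter]
    simp only [cntN, d0, d1, d2, d3, d4, d5, d6, d7, d8, Fin.val_eq_val]
    simp [Fin.sum_univ_succ]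
    rw [Finset.card_filter,
        show (Finset.univ : Finset (Fin 9)) = ({0,1,2,3,4,5,6,7,8} : Finset (Fin 9)) from by decide]
    rw [Finset.sum_insert (by decide), Finset.sum_insert (by decide), Finset.sum_insert (by decide),
        Finset.sum_insert (by decide), Finset.sum_insert (by decide), Finset.sum_insert (by decide),
        Finset.sum_insert (by decide), Finset.sum_insert (by decide), Finset.sum_singleton]
    ring
  calc dominationNumber H9 ≤ 2 := domination_le
    _ < (Finset.univ.filter fun v => f v = i).card := by rw [hcard]; exact hcnti
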